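/- For every r ∈ (0,1), K > 0, σ > 0, η ∈ [0,1), β² > 0 and λ ∈ (0,1), the one-step transition satisfies |Ψ(r, K, η, σ)| ≤ Φ(r), where Φ(r) = λ·√(r² + (1−r²)²/(β² + 2(1−r²))). -/

import Mathlib

set_option maxHeartbeats 1000000


/-- The pre-scaling variance `Λ²(r,K,η,σ)` of the rating update
(observation-noise standard deviation `β`). -/
noncomputable def Lam2 (β r K η σ : ℝ) : ℝ :=
  σ ^ 2 * ((1 - K) ^ 2 + K ^ 2 + 2 * K * (1 - K) * η)
    + K ^ 2 * (β ^ 2 + 2 * (1 - η * r ^ 2))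
    + 2 * K * (1 - K) * (1 - η) * r * σ
    - 2 * K ^ 2 * (1 - η) * r * σ

/-- The one-step accuracy transition function
`Ψ(r,K,η,σ) = λ[rσ(1 − K(1−η)) + K(1 − ηr²)]/√(Λ²(r,K,η,σ))`. -/
noncomputable def Psi (lam β r K η σ : ℝ) : ℝ :=
  lam * (r * σ * (1 - K * (1 - η)) + K * (1 - η * r ^ 2))
    / Real.sqrt (Lam2 β r K η σ)

/-- The invariant one-step accuracy map
`Φ(r) = λ√(r² + (1−r²)²/(β² + 2(1−r²)))`. -/
noncomputable def Phi (lam β r : ℝ) : ℝ :=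
  lam * Real.sqrt (r ^ 2 + (1 - r ^ 2) ^ 2 / (β ^ 2 + 2 * (1 - r ^ 2)))

/-- For every `r ∈ (0,1)`, `K > 0`, `σ > 0`, `η ∈ [0,1)`,
`β² > 0` and `λ ∈ (0,1)`, the one-step transition satisfies
`|Ψ(r,K,η,σ)| ≤ Φ(r)`. -/
theorem abs_Psi_le_Phi
    (r K σ η β lam : ℝ) (hr0 : 0 < r) (hr1 : r < 1) (hK : 0 < K) (hσ : 0 < σ)
    (hη0 : 0 ≤ η) (hη1 : η < 1) (hβ : 0 < β ^ 2)
    (hlam0 : 0 < lam) (hlam1 : lam < 1) :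
    |Psi lam β r K η σ| ≤ Phi lam β r := by
  set D : ℝ := β ^ 2 + 2 * (1 - r ^ 2) with hDdef
  set Mp : ℝ := r ^ 2 * D + (1 - r ^ 2) ^ 2 with hMpdef
  set a : ℝ := r * σ * (1 - K * (1 - η)) + K * (1 - η * r ^ 2) with hadef
  set L : ℝ := Lam2 β r K η σ with hLdef
  have hq : 0 < 1 - r ^ 2 := by nlinarith
  have hD : 0 < D := by positivity
  have he2 : 0 ≤ 1 - η ^ 2 := by nlinarith
  -- Gram determinant
  have hdet : 0 < σ ^ 2 * (D + (1 - η ^ 2) * (σ - r) ^ 2) := by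
    have : 0 ≤ (1 - η ^ 2) * (σ - r) ^ 2 := by positivity
    nlinarith [pow_pos hσ 2]
  -- positivity of the variance Λ²
  have hid1 : σ ^ 2 * L =
      (σ ^ 2 * (1 - K) + (η * σ ^ 2 + (1 - η) * r * σ) * K) ^ 2
        + σ ^ 2 * (D + (1 - η ^ 2) * (σ - r) ^ 2) * K ^ 2 := by
    rw [hLdef]; unfold Lam2; rw [hDdef]; ring
  have hL : 0 < L := by
    have h2 : 0 < σ ^ 2 * (D + (1 - η ^ 2) * (σ - r) ^ 2) * K ^ 2 :=
      mul_pos hdet (pow_pos hK 2)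
    nlinarith [sq_nonneg (σ ^ 2 * (1 - K) + (η * σ ^ 2 + (1 - η) * r * σ) * K),
      pow_pos hσ 2]
  -- the key inequality D a² ≤ Mp L, via the Gram/Cauchy–Schwarz identity
  set Y : ℝ := σ ^ 2 + β ^ 2 + 2 - 2 * η * r ^ 2 - 2 * (1 - η) * r * σ with hYdef
  set ρ : ℝ := η * σ ^ 2 + (1 - η) * r * σ with hρdef
  set S : ℝ := (Y * (r * σ) - ρ * (η * r * σ + 1 - η * r ^ 2)) * K
      - (σ ^ 2 * (η * r * σ + 1 - η * r ^ 2) - ρ * (r * σ)) * (1 - K) with hSdef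
  have hid2 : (Mp * L - D * a ^ 2) * (σ ^ 2 * (D + (1 - η ^ 2) * (σ - r) ^ 2)) =
      D * S ^ 2 + (1 - η ^ 2) * (1 - r ^ 2) ^ 2 * σ ^ 2 * (σ - r) ^ 2 * L := by
    rw [hSdef, hYdef, hρdef, hMpdef, hadef, hLdef]; unfold Lam2; rw [hDdef]; ring
  have hkey : D * a ^ 2 ≤ Mp * L := by
    have hRHS : 0 ≤ D * S ^ 2
        + (1 - η ^ 2) * (1 - r ^ 2) ^ 2 * σ ^ 2 * (σ - r) ^ 2 * L :=
      add_nonneg (mul_nonneg hD.le (sq_nonneg S))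
        (mul_nonneg (mul_nonneg (mul_nonneg (mul_nonneg he2 (sq_nonneg (1 - r ^ 2)))
          (sq_nonneg σ)) (sq_nonneg (σ - r))) hL.le)
    have hprod : 0 ≤ (Mp * L - D * a ^ 2) * (σ ^ 2 * (D + (1 - η ^ 2) * (σ - r) ^ 2)) := by
      rw [hid2]; exact hRHS
    linarith [(mul_nonneg_iff_of_pos_right hdet).mp hprod]
  -- assemble
  have hMp : 0 < Mp := by positivity
  have hsqrtL : 0 < Real.sqrt L := Real.sqrt_pos.mpr hL
  have hPhiArg : r ^ 2 + (1 - r ^ 2) ^ 2 / (β ^ 2 + 2 * (1 - r ^ 2)) = Mp / D := by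
    rw [hMpdef, hDdef]; field_simp
  have h1 : |a| ≤ Real.sqrt (Mp / D) * Real.sqrt L := by
    rw [← Real.sqrt_mul (by positivity) L, ← Real.sqrt_sq_eq_abs]
    apply Real.sqrt_le_sqrt
    rw [div_mul_eq_mul_div, le_div_iff₀ hD]
    nlinarith [hkey]
  have hPsi : |Psi lam β r K η σ| = lam * |a| / Real.sqrt L := by
    unfold Psi
    rw [← hLdef, ← hadef, abs_div, abs_mul, abs_of_pos hlam0,
      abs_of_nonneg (Real.sqrt_nonneg L)]
  rw [hPsi]
  unfold Phi
  rw [hPhiArg, div_le_iff₀ hsqrtL]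
  calc lam * |a| ≤ lam * (Real.sqrt (Mp / D) * Real.sqrt L) := by
        exact mul_le_mul_of_nonneg_left h1 hlam0.le
    _ = lam * Real.sqrt (Mp / D) * Real.sqrt L := by ring
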